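/- The map Φ sending U to (u/w, 1/w), where U = wP + vE + u is the unique decomposition with w, v ∈ ℝ and u ∈ W, is a bijection from the sheet H⁺ = {U ∈ V : ⟨U,U⟩ = 1, ⟨U,E⟩ > 0} of the unit hyperboloid onto W × (0,∞). -/

import Mathlib

noncomputable def mink (n : ℕ) (x y : Fin (n + 1) → ℝ) : ℝ :=
  x 0 * y 0 - ∑ i : Fin n, x i.succ * y i.succ

lemma mink_symm (n : ℕ) (x y : Fin (n+1) → ℝ) : mink n x y = mink n y x := by
  simp [mink, mul_comm]

lemma mink_add_left (n : ℕ) (x y z : Fin (n+1) → ℝ) :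
    mink n (x + y) z = mink n x z + mink n y z := by
  simp only [mink, Pi.add_apply, add_mul, Finset.sum_add_distrib]
  ring

lemma mink_sub_left (n : ℕ) (x y z : Fin (n+1) → ℝ) :
    mink n (x - y) z = mink n x z - mink n y z := by
  simp only [mink, Pi.sub_apply, sub_mul, Finset.sum_sub_distrib]
  ring

lemma mink_smul_left (n : ℕ) (c : ℝ) (x y : Fin (n+1) → ℝ) :
    mink n (c • x) y = c * mink n x y := by
  simp only [mink, Pi.smul_apply, smul_eq_mul, mul_sub, Finset.mul_sum, mul_assoc]

lemma mink_add_right (n : ℕ) (x y z : Fin (n+1) → ℝ) :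
    mink n x (y + z) = mink n x y + mink n x z := by
  rw [mink_symm, mink_add_left, mink_symm n y, mink_symm n z]

lemma mink_sub_right (n : ℕ) (x y z : Fin (n+1) → ℝ) :
    mink n x (y - z) = mink n x y - mink n x z := by
  rw [mink_symm, mink_sub_left, mink_symm n y, mink_symm n z]

lemma mink_smul_right (n : ℕ) (c : ℝ) (x y : Fin (n+1) → ℝ) :
    mink n x (c • y) = c * mink n x y := by
  rw [mink_symm, mink_smul_left, mink_symm]

/-- The map `U = wP + vE + u ↦ (u/w, 1/w)` is a bijection from the sheet
`H⁺ = {U : ⟨U,U⟩ = 1, ⟨U,E⟩ > 0}` of the unit hyperboloid onto `W × (0,∞)`. -/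
theorem upper_half_space_bijection (n : ℕ) (hn : 1 ≤ n)
    (E P : Fin (n + 1) → ℝ)
    (hE : mink n E E = 0) (hP : mink n P P = 0) (hPE : mink n P E = 1) :
    Set.BijOn
      (fun U : Fin (n + 1) → ℝ =>
        (((mink n U E)⁻¹ • (U - mink n U E • P - mink n U P • E) :
            Fin (n + 1) → ℝ),
          (mink n U E)⁻¹))
      {U | mink n U U = 1 ∧ 0 < mink n U E}
      (({x | mink n x E = 0 ∧ mink n x P = 0} : Set (Fin (n + 1) → ℝ)) ×ˢ
        Set.Ioi (0 : ℝ)) := by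
  have hEP : mink n E P = 1 := by rw [mink_symm]; exact hPE
  have expand : ∀ U : Fin (n+1) → ℝ,
      mink n (U - mink n U E • P - mink n U P • E)
        (U - mink n U E • P - mink n U P • E)
      = mink n U U - 2 * mink n U E * mink n U P := by
    intro U
    have h1 : mink n P U = mink n U P := mink_symm n P U
    have h2 : mink n E U = mink n U E := mink_symm n E U
    simp only [mink_sub_left, mink_sub_right, mink_smul_left, mink_smul_right,
      hE, hP, hPE, hEP, h1, h2]
    ring
  refine ⟨?_, ?_, ?_⟩
  · rintro U ⟨hU1, hU2⟩
    have hw : mink n U E ≠ 0 := ne_of_gt hU2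
    refine ⟨⟨?_, ?_⟩, ?_⟩
    · simp only [mink_smul_left, mink_sub_left, mink_smul_left, hE, hPE]
      field_simp
      ring
    · simp only [mink_smul_left, mink_sub_left, mink_smul_left, hP, hEP]
      field_simp
      ring
    · exact inv_pos.mpr hU2
  · rintro U ⟨hU1, hU2⟩ U' ⟨hU1', hU2'⟩ heq
    have hw : mink n U E ≠ 0 := ne_of_gt hU2
    simp only [Prod.mk.injEq] at heq
    obtain ⟨h1, h2⟩ := heq
    have hww : mink n U E = mink n U' E := inv_injective h2
    have hu : U - mink n U E • P - mink n U P • E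
        = U' - mink n U' E • P - mink n U' P • E := by
      have := congrArg (fun z => (mink n U E : ℝ) • z) h1
      simpa [smul_smul, mul_inv_cancel₀ hw, hww, ne_of_gt hU2'] using this
    have hmm : mink n U U - 2 * mink n U E * mink n U P
        = mink n U' U' - 2 * mink n U' E * mink n U' P := by
      rw [← expand, ← expand, hu]
    rw [hU1, hU1', hww] at hmm
    have hv : mink n U P = mink n U' P := by
      have h3 : 2 * mink n U' E * mink n U P = 2 * mink n U' E * mink n U' P := by
        linarith
      exact mul_left_cancel₀ (by positivity) h3
    rw [← hww, ← hv, sub_left_inj, sub_left_inj] at hu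
    exact hu
  · rintro ⟨y, t⟩ ⟨⟨hyE, hyP⟩, ht⟩
    have ht0 : (t : ℝ) ≠ 0 := ne_of_gt ht
    set v : ℝ := (t - mink n y y * t⁻¹) / 2 with hv
    refine ⟨t⁻¹ • P + v • E + t⁻¹ • y, ⟨?_, ?_⟩, ?_⟩
    · have h1 : mink n P y = 0 := by rw [mink_symm]; exact hyP
      have h2 : mink n E y = 0 := by rw [mink_symm]; exact hyE
      simp only [mink_add_left, mink_add_right, mink_smul_left, mink_smul_right,
        hE, hP, hPE, hEP, hyE, hyP, h1, h2]
      rw [hv]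
      field_simp
      ring
    · simp only [mink_add_left, mink_smul_left, hE, hPE, hyE, mul_zero, mul_one,
        add_zero]
      exact inv_pos.mpr ht
    · have hwE : mink n (t⁻¹ • P + v • E + t⁻¹ • y) E = t⁻¹ := by
        simp only [mink_add_left, mink_smul_left, hE, hPE, hyE]
        ring
      have hwP : mink n (t⁻¹ • P + v • E + t⁻¹ • y) P = v := by
        simp only [mink_add_left, mink_smul_left, hP, hEP, hyP]
        ring
      have hsub : (t⁻¹ • P + v • E + t⁻¹ • y) - t⁻¹ • P - v • E = t⁻¹ • y := by
        abel
      simp only [hwE, hwP, hsub, inv_inv, smul_smul, mul_inv_cancel₀ ht0, one_smul]
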